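/- Let G be a group, H ≤ G a subgroup and K ≤ Z^∧(G) a subgroup of the exterior center of G. If G = HK and H ∩ K ≤ Z^∧(H), then M(G) ≅ M(H). -/

import Mathlib

/-!
Nonabelian tensor square modulo `q` (Conduché–Ellis / Brown–Loday for `q = 0`),
presented by generators `g ⊗ h` and `{(g,g)}` with the defining relations.
-/

namespace QTensor

/-- Generators of the `q`-tensor square: `t g h` stands for `g ⊗ h`,
and `d g` stands for the symbol `{(g,g)}`. -/
inductive Gen (G : Type) : Type
  | t : G → G → Gen G
  | d : G → Gen G

variable (G : Type) [Group G]

/-- The word `g ⊗ h` in the free group on the generators. -/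
def T (g h : G) : FreeGroup (Gen G) := FreeGroup.of (Gen.t g h)

/-- The word `{(g,g)}` in the free group on the generators. -/
def D (g : G) : FreeGroup (Gen G) := FreeGroup.of (Gen.d g)

/-- The word `∏_{i=1}^{q-1} (g⁻¹ ⊗ (^(g^(1-q+i)) g₁)^i)` appearing in relation (4). -/
def relProd (q : ℕ) (g g₁ : G) : FreeGroup (Gen G) :=
  ((List.range (q - 1)).map (fun j =>
    T G g⁻¹ ((g ^ ((1 : ℤ) - (q : ℤ) + (j + 1 : ℕ)) * g₁ *
      (g ^ ((1 : ℤ) - (q : ℤ) + (j + 1 : ℕ)))⁻¹) ^ (j + 1)))).prod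

/-- The defining relations of the `q`-tensor square.  For `q = 0` the symbols
`{(g,g)}` are killed, so that the group is the Brown–Loday nonabelian tensor
square generated by the `g ⊗ h` subject to relations (1) and (2). -/
def rels (q : ℕ) : Set (FreeGroup (Gen G)) :=
  {r | ∃ g g₁ h : G,
      r = T G (g * g₁) h * (T G (g * g₁ * g⁻¹) (g * h * g⁻¹) * T G g h)⁻¹} ∪
  {r | ∃ g h h₁ : G,
      r = T G g (h * h₁) * (T G g h * T G (h * g * h⁻¹) (h * h₁ * h⁻¹))⁻¹} ∪
  {r | ∃ g g₁ h₁ : G,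
      r = D G g * T G g₁ h₁ * (D G g)⁻¹ *
        (T G (g ^ q * g₁ * (g ^ q)⁻¹) (g ^ q * h₁ * (g ^ q)⁻¹))⁻¹} ∪
  {r | ∃ g g₁ : G,
      r = D G (g * g₁) * (D G g * relProd G q g g₁ * D G g₁)⁻¹} ∪
  {r | ∃ g g₁ : G,
      r = D G g * D G g₁ * (D G g)⁻¹ * (D G g₁)⁻¹ * (T G (g ^ q) (g₁ ^ q))⁻¹} ∪
  {r | ∃ g h : G,
      r = D G (g * h * g⁻¹ * h⁻¹) * ((T G g h) ^ q)⁻¹} ∪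
  {r | q = 0 ∧ ∃ g : G, r = D G g}

/-- The nonabelian tensor square modulo `q`, `G ⊗^q G`. -/
def tensorSquare (q : ℕ) : Type := PresentedGroup (rels G q)

instance (q : ℕ) : Group (tensorSquare G q) := by unfold tensorSquare; infer_instance

/-- The element `g ⊗ h` of `G ⊗^q G`. -/
def tmk (q : ℕ) (g h : G) : tensorSquare G q := PresentedGroup.of (Gen.t g h)

/-- The element `{(g,g)}` of `G ⊗^q G`. -/
def dmk (q : ℕ) (g : G) : tensorSquare G q := PresentedGroup.of (Gen.d g)

/-- `∇^q(G)`, the normal closure of the elements `g ⊗ g` in `G ⊗^q G`. -/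
def nabla (q : ℕ) : Subgroup (tensorSquare G q) :=
  Subgroup.normalClosure {x | ∃ g : G, x = tmk G q g g}

instance (q : ℕ) : (nabla G q).Normal := Subgroup.normalClosure_normal

/-- The exterior square modulo `q`, `G ∧^q G = (G ⊗^q G)/∇^q(G)`. -/
def extSquare (q : ℕ) : Type := tensorSquare G q ⧸ nabla G q

instance (q : ℕ) : Group (extSquare G q) := by unfold extSquare; infer_instance

/-- The element `g ∧ h` of `G ∧^q G`. -/
def wmk (q : ℕ) (g h : G) : extSquare G q := QuotientGroup.mk (tmk G q g h)

/-- The image of the symbol `{(g,g)}` in `G ∧^q G`. -/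
def dwmk (q : ℕ) (g : G) : extSquare G q := QuotientGroup.mk (dmk G q g)

/-- The exterior centre variant `Z^∧_q(G) = {g : g ∧ h = 1 for all h}` (as a set). -/
def Zext (q : ℕ) : Set G := {g | ∀ h : G, wmk G q g h = 1}

/-- `E^∧_q(G) = {g ∈ Z^∧_q(G) : {(g,g)} = 1 in G ∧^q G}` (as a set); for `q = 0`
the second condition is automatic, so `E^∧_0(G) = Z^∧(G)`. -/
def Eext (q : ℕ) : Set G := {g | (∀ h : G, wmk G q g h = 1) ∧ dwmk G q g = 1}

/-- The subgroup `G^q[G,G]` generated by all `q`-th powers and all commutators. -/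
def qPowComm (q : ℕ) : Subgroup G :=
  Subgroup.closure ({x | ∃ g : G, x = g ^ q} ∪ {x | ∃ a b : G, x = a * b * a⁻¹ * b⁻¹})

theorem pow_mem_qPowComm (q : ℕ) (g : G) : g ^ q ∈ qPowComm G q :=
  Subgroup.subset_closure (Or.inl ⟨g, rfl⟩)

theorem commutator_mem_qPowComm (q : ℕ) (a b : G) :
    a * b * a⁻¹ * b⁻¹ ∈ qPowComm G q :=
  Subgroup.subset_closure (Or.inr ⟨a, b, rfl⟩)

open scoped commutatorElement in
theorem mem_commutator (a b : G) : ⁅a, b⁆ ∈ commutator G :=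
  Subgroup.commutator_mem_commutator (Subgroup.mem_top a) (Subgroup.mem_top b)

/-- `M₀^q(G)`: the subgroup of `G ∧^q G` generated by the `x ∧ y` with `[x,y] = 1`.
(It is contained in the `q`-Schur multiplier `M^q(G)`.) -/
def M0 (q : ℕ) : Subgroup (extSquare G q) :=
  Subgroup.closure {x | ∃ a b : G, a * b = b * a ∧ x = wmk G q a b}

/-- `M̂₀^q(G)`: the subgroup of `G ∧^q G` generated by the `x ∧ y` with `[x,y] = 1`
together with the `{(g,g)}` with `g^q = 1`. -/
def M0hat (q : ℕ) : Subgroup (extSquare G q) :=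
  Subgroup.closure
    ({x | ∃ a b : G, a * b = b * a ∧ x = wmk G q a b} ∪
     {x | ∃ g : G, g ^ q = 1 ∧ x = dwmk G q g})

/-- A group `Q` is capable if `Q ≅ E/Z(E)` for some group `E`. -/
def Capable (Q : Type) [Group Q] : Prop :=
  ∃ (E : Type) (_ : Group E), Nonempty (Q ≃* E ⧸ Subgroup.center E)

-- ==== auxiliary development ====
variable {G}

lemma mk_rel_one {q : ℕ} {r : FreeGroup (Gen G)} (hr : r ∈ rels G q) :
    PresentedGroup.mk (rels G q) r = 1 :=
  (QuotientGroup.eq_one_iff r).mpr (Subgroup.subset_normalClosure hr)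

lemma tmk_rel1 (q : ℕ) (g g₁ h : G) :
    tmk G q (g * g₁) h = tmk G q (g * g₁ * g⁻¹) (g * h * g⁻¹) * tmk G q g h := by
  have h0 : (T G (g * g₁) h * (T G (g * g₁ * g⁻¹) (g * h * g⁻¹) * T G g h)⁻¹) ∈ rels G q :=
    Or.inl (Or.inl (Or.inl (Or.inl (Or.inl (Or.inl ⟨g, g₁, h, rfl⟩)))))
  have := mk_rel_one h0
  rw [map_mul, map_inv, map_mul] at this
  exact mul_inv_eq_one.mp this

lemma tmk_rel2 (q : ℕ) (g h h₁ : G) :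
    tmk G q g (h * h₁) = tmk G q g h * tmk G q (h * g * h⁻¹) (h * h₁ * h⁻¹) := by
  have h0 : (T G g (h * h₁) * (T G g h * T G (h * g * h⁻¹) (h * h₁ * h⁻¹))⁻¹) ∈ rels G q :=
    Or.inl (Or.inl (Or.inl (Or.inl (Or.inl (Or.inr ⟨g, h, h₁, rfl⟩)))))
  have := mk_rel_one h0
  rw [map_mul, map_inv, map_mul] at this
  exact mul_inv_eq_one.mp this

lemma wmk_rel1 (q : ℕ) (g g₁ h : G) :
    wmk G q (g * g₁) h = wmk G q (g * g₁ * g⁻¹) (g * h * g⁻¹) * wmk G q g h := by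
  show (QuotientGroup.mk (tmk G q (g * g₁) h) : extSquare G q) = _
  rw [tmk_rel1]; rfl

lemma wmk_rel2 (q : ℕ) (g h h₁ : G) :
    wmk G q g (h * h₁) = wmk G q g h * wmk G q (h * g * h⁻¹) (h * h₁ * h⁻¹) := by
  show (QuotientGroup.mk (tmk G q g (h * h₁)) : extSquare G q) = _
  rw [tmk_rel2]; rfl

lemma wmk_diag (q : ℕ) (g : G) : wmk G q g g = 1 :=
  (QuotientGroup.eq_one_iff _).mpr (Subgroup.subset_normalClosure ⟨g, rfl⟩)

lemma dmk_zero (g : G) : dmk G 0 g = 1 :=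
  mk_rel_one (Or.inr ⟨rfl, g, rfl⟩)

lemma dwmk_zero (g : G) : dwmk G 0 g = 1 := by
  show (QuotientGroup.mk (dmk G 0 g) : extSquare G 0) = 1
  rw [dmk_zero]; rfl

lemma wmk_one_left (q : ℕ) (h : G) : wmk G q 1 h = 1 := by
  have := wmk_rel1 q 1 1 h
  simp only [mul_one, one_mul, inv_one] at this
  exact (left_eq_mul.mp this)

lemma wmk_antisym (q : ℕ) (g x : G) : wmk G q g x = (wmk G q x g)⁻¹ := by
  have key : ∀ h : G, wmk G q g (g * h * g⁻¹) = (wmk G q (g * h * g⁻¹) g)⁻¹ := by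
    intro h
    have s1 : wmk G q g (g * h) = wmk G q g (g * h * g⁻¹) := by
      have := wmk_rel2 q g g h
      rw [wmk_diag] at this
      simpa using this
    have s3 : wmk G q (g * h * g⁻¹) (g * (g * h) * g⁻¹) = wmk G q (g * h * g⁻¹) g := by
      have := wmk_rel2 q (g * h * g⁻¹) g (g * h * g⁻¹)
      rw [wmk_diag] at this
      have harg : g * (g * h * g⁻¹) = g * (g * h) * g⁻¹ := by group
      rw [harg] at this
      simpa using this
    have main : (1 : extSquare G q) =
        wmk G q (g * h * g⁻¹) (g * (g * h) * g⁻¹) * wmk G q g (g * h) := by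
      rw [← wmk_rel1 q g h (g * h), wmk_diag]
    rw [s1, s3] at main
    exact eq_inv_of_mul_eq_one_right (by rw [← main])
  have := key (g⁻¹ * x * g)
  have harg : g * (g⁻¹ * x * g) * g⁻¹ = x := by group
  rwa [harg] at this

lemma wmk_zext_right (q : ℕ) {k : G} (hz : ∀ x : G, wmk G q k x = 1) (x : G) :
    wmk G q x k = 1 := by
  rw [wmk_antisym, hz, inv_one]

lemma wmk_absorb_left (q : ℕ) {k : G} (hz : ∀ x : G, wmk G q k x = 1)
    (hc : ∀ x : G, k * x = x * k) (a b : G) :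
    wmk G q (a * k) b = wmk G q a b := by
  have := wmk_rel1 q a k b
  have hconj : a * k * a⁻¹ = k := by
    rw [← hc a]; group
  rw [hconj, hz] at this
  simpa using this

lemma wmk_absorb_right (q : ℕ) {k : G} (hz : ∀ x : G, wmk G q k x = 1)
    (hc : ∀ x : G, k * x = x * k) (a b : G) :
    wmk G q a (b * k) = wmk G q a b := by
  have := wmk_rel2 q a b k
  have hconj : b * k * b⁻¹ = k := by rw [← hc b]; group
  rw [hconj, wmk_zext_right q hz] at this
  simpa using this

section MkHom
variable {P : Type} [Group P] (f : G → G → P)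

/-- Map on generators. -/
def genMap : Gen G → P := fun x => match x with
  | Gen.t g h => f g h
  | Gen.d _ => 1

lemma lift_T (g h : G) : FreeGroup.lift (genMap f) (T G g h) = f g h := FreeGroup.lift_apply_of
lemma lift_D (g : G) : FreeGroup.lift (genMap f) (D G g) = 1 := FreeGroup.lift_apply_of

lemma lift_rels
    (h1 : ∀ g g₁ h, f (g * g₁) h = f (g * g₁ * g⁻¹) (g * h * g⁻¹) * f g h)
    (h2 : ∀ g h h₁, f g (h * h₁) = f g h * f (h * g * h⁻¹) (h * h₁ * h⁻¹)) :
    ∀ r ∈ rels G 0, FreeGroup.lift (genMap f) r = 1 := by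
  have fone : ∀ h : G, f 1 h = 1 := by
    intro h
    have := h1 1 1 h
    simp only [one_mul, mul_one, inv_one] at this
    exact (left_eq_mul.mp this)
  rintro r
    ((((((⟨g,g₁,h,rfl⟩|⟨g,h,h₁,rfl⟩)|⟨g,g₁,h₁,rfl⟩)|⟨g,g₁,rfl⟩)|⟨g,g₁,rfl⟩)|⟨g,h,rfl⟩)|⟨-,g,rfl⟩)
  · rw [map_mul, map_inv, map_mul, lift_T, lift_T, lift_T, h1 g g₁ h]
    group
  · rw [map_mul, map_inv, map_mul, lift_T, lift_T, lift_T, h2 g h h₁]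
    group
  · simp [lift_T, lift_D]
  · simp [relProd, lift_D]
  · simp [lift_T, lift_D, fone]
  · simp [lift_D]
  · simp [lift_D]

/-- Universal property of the exterior square (q = 0). -/
def mkHom
    (h1 : ∀ g g₁ h, f (g * g₁) h = f (g * g₁ * g⁻¹) (g * h * g⁻¹) * f g h)
    (h2 : ∀ g h h₁, f g (h * h₁) = f g h * f (h * g * h⁻¹) (h * h₁ * h⁻¹))
    (h3 : ∀ g, f g g = 1) : extSquare G 0 →* P :=
  QuotientGroup.lift (nabla G 0) (PresentedGroup.toGroup (lift_rels f h1 h2))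
    (fun x hx => (@Subgroup.normalClosure_le_normal (tensorSquare G 0) _ _
      (PresentedGroup.toGroup (lift_rels f h1 h2)).ker (MonoidHom.normal_ker _)
      (fun y hy => by
        obtain ⟨g, rfl⟩ := hy
        show tmk G 0 g g ∈ (PresentedGroup.toGroup (lift_rels f h1 h2)).ker
        apply MonoidHom.mem_ker.mpr
        show PresentedGroup.toGroup (lift_rels f h1 h2) (PresentedGroup.of (Gen.t g g)) = 1
        rw [PresentedGroup.toGroup.of]
        exact h3 g)) hx)

@[simp] lemma mkHom_wmk
    (h1 : ∀ g g₁ h, f (g * g₁) h = f (g * g₁ * g⁻¹) (g * h * g⁻¹) * f g h)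
    (h2 : ∀ g h h₁, f g (h * h₁) = f g h * f (h * g * h⁻¹) (h * h₁ * h⁻¹))
    (h3 : ∀ g, f g g = 1) (g h : G) :
    mkHom f h1 h2 h3 (wmk G 0 g h) = f g h := by
  show QuotientGroup.lift _ _ _ (QuotientGroup.mk (tmk G 0 g h)) = f g h
  show PresentedGroup.toGroup (lift_rels f h1 h2) (tmk G 0 g h) = f g h
  show PresentedGroup.toGroup (lift_rels f h1 h2) (PresentedGroup.of (Gen.t g h)) = f g h
  rw [PresentedGroup.toGroup.of]
  rfl

end MkHom

lemma hom_ext {P : Type} [Group P] {Φ Ψ : extSquare G 0 →* P}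
    (h : ∀ g h' : G, Φ (wmk G 0 g h') = Ψ (wmk G 0 g h')) : Φ = Ψ := by
  have hsurj : Function.Surjective (QuotientGroup.mk' (nabla G 0)) :=
    QuotientGroup.mk'_surjective _
  apply (MonoidHom.cancel_right hsurj).mp
  refine PresentedGroup.ext fun x => ?_
  match x with
  | Gen.t g h' => exact h g h'
  | Gen.d g =>
      show Φ (dwmk G 0 g) = Ψ (dwmk G 0 g)
      rw [dwmk_zero]
      simp

end QTensor

open QTensor in
/-- If `G = HK` with `K ≤ Z^∧(G)` and `H ∩ K ≤ Z^∧(H)`, then `M(G) ≅ M(H)`. -/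
theorem schurMultiplier_iso_of_product (G : Type) [Group G] (H K : Subgroup G)
    (ηG : extSquare G 0 →* G)
    (hηG : ∀ g h : G, ηG (wmk G 0 g h) = g * h * g⁻¹ * h⁻¹)
    (ηH : extSquare H 0 →* H)
    (hηH : ∀ a b : H, ηH (wmk (↥H) 0 a b) = a * b * a⁻¹ * b⁻¹)
    (hK : (K : Set G) ⊆ Zext G 0)
    (hHK : ∀ g : G, ∃ h ∈ H, ∃ k ∈ K, g = h * k)
    (hHcapK : ∀ x : H, (x : G) ∈ K → x ∈ Zext (↥H) 0) :
    Nonempty (ηG.ker ≃* ηH.ker) := by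
  classical
  -- K consists of exterior-central, hence central, elements
  have kz : ∀ k ∈ K, ∀ x : G, wmk G 0 k x = 1 := fun k hk => hK hk
  have kcent : ∀ k ∈ K, ∀ x : G, k * x = x * k := by
    intro k hk x
    have h1 : ηG (wmk G 0 k x) = 1 := by rw [kz k hk x, map_one]
    rw [hηG] at h1
    have h2 : k * x * k⁻¹ = x := mul_inv_eq_one.mp h1
    exact mul_inv_eq_iff_eq_mul.mp h2
  -- decomposition G = HK
  choose hh hhH kk kkK hdec using hHK
  have ez : ∀ c : ↥H, (c : G) ∈ K → ∀ x : ↥H, wmk (↥H) 0 c x = 1 :=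
    fun c hc => hHcapK c hc
  have ecent : ∀ c : ↥H, (c : G) ∈ K → ∀ x : ↥H, c * x = x * c :=
    fun c hc x => Subtype.ext (kcent _ hc _)
  -- key: the chosen H-part only matters modulo K
  have keyH : ∀ (g : G) (a : ↥H), (∃ k ∈ K, g = (a : G) * k) →
      (∀ x : ↥H, wmk (↥H) 0 ⟨hh g, hhH g⟩ x = wmk (↥H) 0 a x) ∧
      (∀ x : ↥H, wmk (↥H) 0 x ⟨hh g, hhH g⟩ = wmk (↥H) 0 x a) := by
    rintro g a ⟨k, hkK, hgk⟩
    have hhg : hh g = ((a : G) * k) * (kk g)⁻¹ := by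
      have h' : (a : G) * k = hh g * kk g := by rw [← hgk]; exact hdec g
      rw [h']; group
    have hcK : ((a⁻¹ * ⟨hh g, hhH g⟩ : ↥H) : G) ∈ K := by
      have hco : ((a⁻¹ * ⟨hh g, hhH g⟩ : ↥H) : G) = k * (kk g)⁻¹ := by
        push_cast
        rw [hhg]; group
      rw [hco]
      exact K.mul_mem hkK (K.inv_mem (kkK g))
    have hSeq : (⟨hh g, hhH g⟩ : ↥H) = a * (a⁻¹ * ⟨hh g, hhH g⟩) := by
      rw [mul_inv_cancel_left]
    have left : ∀ x : ↥H, wmk (↥H) 0 ⟨hh g, hhH g⟩ x = wmk (↥H) 0 a x := by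
      intro x
      rw [hSeq]
      exact wmk_absorb_left 0 (ez _ hcK) (ecent _ hcK) a x
    refine ⟨left, fun x => ?_⟩
    calc wmk (↥H) 0 x ⟨hh g, hhH g⟩ = (wmk (↥H) 0 (⟨hh g, hhH g⟩ : ↥H) x)⁻¹ :=
          wmk_antisym _ _ _
      _ = (wmk (↥H) 0 a x)⁻¹ := by rw [left x]
      _ = wmk (↥H) 0 x a := (wmk_antisym _ _ _).symm
  -- the relation "g decomposes over a"
  have base : ∀ g : G, ∃ k ∈ K, g = ((⟨hh g, hhH g⟩ : ↥H) : G) * k :=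
    fun g => ⟨kk g, kkK g, hdec g⟩
  have relmul : ∀ {g g₁ : G} {a a₁ : ↥H}, (∃ k ∈ K, g = (a : G) * k) →
      (∃ k ∈ K, g₁ = (a₁ : G) * k) →
      ∃ k ∈ K, g * g₁ = ((a * a₁ : ↥H) : G) * k := by
    rintro g g₁ a a₁ ⟨k, hk, rfl⟩ ⟨k₁, hk₁, rfl⟩
    refine ⟨k * k₁, K.mul_mem hk hk₁, ?_⟩
    push_cast
    have hsw : k * (a₁ : G) = (a₁ : G) * k := kcent k hk _
    calc (a : G) * k * ((a₁ : G) * k₁) = (a : G) * (k * (a₁ : G)) * k₁ := by group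
      _ = (a : G) * ((a₁ : G) * k) * k₁ := by rw [hsw]
      _ = (a : G) * (a₁ : G) * (k * k₁) := by group
  have relinv : ∀ {g : G} {a : ↥H}, (∃ k ∈ K, g = (a : G) * k) →
      ∃ k ∈ K, g⁻¹ = ((a⁻¹ : ↥H) : G) * k := by
    rintro g a ⟨k, hk, rfl⟩
    refine ⟨k⁻¹, K.inv_mem hk, ?_⟩
    push_cast
    rw [mul_inv_rev, kcent _ (K.inv_mem hk) _]
  -- the two homomorphisms
  set fφ : ↥H → ↥H → extSquare G 0 := fun a b => wmk G 0 a b with hfφ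
  have h1φ : ∀ a a₁ b : ↥H, fφ (a * a₁) b = fφ (a * a₁ * a⁻¹) (a * b * a⁻¹) * fφ a b := by
    intro a a₁ b
    simp only [hfφ]
    push_cast
    exact wmk_rel1 0 _ _ _
  have h2φ : ∀ a b b₁ : ↥H, fφ a (b * b₁) = fφ a b * fφ (b * a * b⁻¹) (b * b₁ * b⁻¹) := by
    intro a b b₁
    simp only [hfφ]
    push_cast
    exact wmk_rel2 0 _ _ _
  have h3φ : ∀ a : ↥H, fφ a a = 1 := fun a => wmk_diag 0 _
  set φ : extSquare (↥H) 0 →* extSquare G 0 := mkHom fφ h1φ h2φ h3φ with hφdef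
  set fψ : G → G → extSquare (↥H) 0 :=
    fun g g' => wmk (↥H) 0 ⟨hh g, hhH g⟩ ⟨hh g', hhH g'⟩ with hfψ
  have h1ψ : ∀ g g₁ g₂ : G, fψ (g * g₁) g₂ =
      fψ (g * g₁ * g⁻¹) (g * g₂ * g⁻¹) * fψ g g₂ := by
    intro g g₁ g₂
    simp only [hfψ]
    rw [(keyH (g * g₁) _ (relmul (base g) (base g₁))).1,
      (keyH (g * g₁ * g⁻¹) _ (relmul (relmul (base g) (base g₁)) (relinv (base g)))).1,
      (keyH (g * g₂ * g⁻¹) _ (relmul (relmul (base g) (base g₂)) (relinv (base g)))).2]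
    exact wmk_rel1 0 _ _ _
  have h2ψ : ∀ g g₁ g₂ : G, fψ g (g₁ * g₂) =
      fψ g g₁ * fψ (g₁ * g * g₁⁻¹) (g₁ * g₂ * g₁⁻¹) := by
    intro g g₁ g₂
    simp only [hfψ]
    rw [(keyH (g₁ * g₂) _ (relmul (base g₁) (base g₂))).2,
      (keyH (g₁ * g * g₁⁻¹) _ (relmul (relmul (base g₁) (base g)) (relinv (base g₁)))).1,
      (keyH (g₁ * g₂ * g₁⁻¹) _ (relmul (relmul (base g₁) (base g₂)) (relinv (base g₁)))).2]
    exact wmk_rel2 0 _ _ _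
  have h3ψ : ∀ g : G, fψ g g = 1 := fun g => wmk_diag 0 _
  set Ψ : extSquare G 0 →* extSquare (↥H) 0 := mkHom fψ h1ψ h2ψ h3ψ with hΨdef
  have hΨφ : Ψ.comp φ = MonoidHom.id _ := by
    apply hom_ext
    intro a b
    show Ψ (φ (wmk (↥H) 0 a b)) = wmk (↥H) 0 a b
    rw [hφdef, mkHom_wmk, hΨdef]
    show Ψ (wmk G 0 (a : G) (b : G)) = wmk (↥H) 0 a b
    rw [hΨdef, mkHom_wmk]
    show wmk (↥H) 0 ⟨hh (a : G), hhH _⟩ ⟨hh (b : G), hhH _⟩ = wmk (↥H) 0 a b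
    rw [(keyH (a : G) a ⟨1, K.one_mem, (mul_one _).symm⟩).1,
      (keyH (b : G) b ⟨1, K.one_mem, (mul_one _).symm⟩).2]
  have hφΨ : φ.comp Ψ = MonoidHom.id _ := by
    apply hom_ext
    intro g g'
    show φ (Ψ (wmk G 0 g g')) = wmk G 0 g g'
    rw [hΨdef, mkHom_wmk, hφdef]
    show φ (wmk (↥H) 0 ⟨hh g, hhH g⟩ ⟨hh g', hhH g'⟩) = wmk G 0 g g'
    rw [hφdef, mkHom_wmk]
    show wmk G 0 (hh g) (hh g') = wmk G 0 g g'
    calc wmk G 0 (hh g) (hh g')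
        = wmk G 0 (hh g * kk g) (hh g') :=
          (wmk_absorb_left 0 (kz _ (kkK g)) (kcent _ (kkK g)) _ _).symm
      _ = wmk G 0 g (hh g') := by rw [← hdec g]
      _ = wmk G 0 g (hh g' * kk g') :=
          (wmk_absorb_right 0 (kz _ (kkK g')) (kcent _ (kkK g')) _ _).symm
      _ = wmk G 0 g g' := by rw [← hdec g']
  set e : extSquare (↥H) 0 ≃* extSquare G 0 := MonoidHom.toMulEquiv φ Ψ hΨφ hφΨ with hedef
  have hsq : ηG.comp φ = H.subtype.comp ηH := by
    apply hom_ext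
    intro a b
    show ηG (φ (wmk (↥H) 0 a b)) = H.subtype (ηH (wmk (↥H) 0 a b))
    rw [hφdef, mkHom_wmk, hηG, hηH]
    push_cast
    rfl
  have hker : Subgroup.map e.toMonoidHom ηH.ker = ηG.ker := by
    ext y
    constructor
    · rintro ⟨x, hx, rfl⟩
      have hc : ηG (φ x) = H.subtype (ηH x) := DFunLike.congr_fun hsq x
      have hx1 : ηH x = 1 := hx
      rw [MonoidHom.mem_ker]
      show ηG (φ x) = 1
      rw [hc, hx1, map_one]
    · intro hy
      have h2 : φ (Ψ y) = y := DFunLike.congr_fun hφΨ y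
      refine ⟨Ψ y, ?_, h2⟩
      have h1 : ηG (φ (Ψ y)) = H.subtype (ηH (Ψ y)) := DFunLike.congr_fun hsq (Ψ y)
      rw [h2] at h1
      have hy1 : ηG y = 1 := hy
      show ηH (Ψ y) = 1
      have hco : H.subtype (ηH (Ψ y)) = 1 := by rw [← h1, hy1]
      exact (OneMemClass.coe_eq_one).mp hco
  exact ⟨(MulEquiv.subgroupCongr hker.symm).trans (e.subgroupMap ηH.ker).symm⟩
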